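/- For the manifold N̂⁷ constructed as the base of the 2-sheeted covering N⁷ = (S³×S³) ⋊ S¹ → N̂⁷ (quotient of the 4-fold covering structure by pairs of antipodal 2-point configurations), with characteristic class p ∈ H¹(N̂⁷; Z/2) of this covering, the mod 2 characteristic number ⟨p⁷, [N̂⁷]⟩ equals 1. -/

import Mathlib

open Metric

/-- The standard 3-sphere `S³ ⊂ ℝ⁴`. -/
abbrev Sph3 := Metric.sphere (0 : EuclideanSpace ℝ (Fin 4)) 1

/-- The standard 7-sphere `S⁷ ⊂ ℝ⁸`. -/
abbrev Sph7 := Metric.sphere (0 : EuclideanSpace ℝ (Fin 8)) 1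

/-- Antipodal map on a sphere (as a subtype map). -/
def sphereNeg {n : ℕ} (x : Metric.sphere (0 : EuclideanSpace ℝ (Fin n)) 1) :
    Metric.sphere (0 : EuclideanSpace ℝ (Fin n)) 1 :=
  ⟨-(x : EuclideanSpace ℝ (Fin n)), by simpa using x.2⟩

/-- The swap involution on `S³ × S³`. -/
def swapMap (x : Sph3 × Sph3) : Sph3 × Sph3 := (x.2, x.1)

/-- The generating relation of the mapping torus of `g`: `(x,t) ∼ (g x, t+1)`. -/
def mtRel {X : Type*} (g : X → X) (a b : X × ℝ) : Prop := b = (g a.1, a.2 + 1)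

/-- The mapping torus `(S³×S³) ⋊ S¹`-style quotient of `X × ℝ`. -/
def MappingTorus {X : Type*} [TopologicalSpace X] (g : X → X) : Type _ := Quot (mtRel g)

instance {X : Type*} [TopologicalSpace X] (g : X → X) : TopologicalSpace (MappingTorus g) :=
  instTopologicalSpaceQuot

/-- The antipodal relation on `S⁷`. -/
def antipRel7 (a b : Sph7) : Prop :=
  (b : EuclideanSpace ℝ (Fin 8)) = -(a : EuclideanSpace ℝ (Fin 8))

/-- `ℝP⁷ = S⁷/antipodal`. -/
def RP7 : Type _ := Quot antipRel7

noncomputable instance : TopologicalSpace RP7 := instTopologicalSpaceQuot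

----------------------------------------------------------------
-- auxiliary development
----------------------------------------------------------------
noncomputable section CharAux

lemma pos_mul_negpart (r : ℝ) : max r 0 * max (-r) 0 = 0 := by
  rcases le_total r 0 with h | h
  · rw [max_eq_right h, zero_mul]
  · rw [max_eq_right (neg_nonpos.mpr h), mul_zero]

lemma pospart_sq_add (r : ℝ) : max r 0 ^ 2 + max (-r) 0 ^ 2 = r ^ 2 := by
  rcases le_total r 0 with h | h
  · rw [max_eq_right h, max_eq_left (neg_nonneg.mpr h)]; ring
  · rw [max_eq_left h, max_eq_right (neg_nonpos.mpr h)]; ring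

lemma sph3_sum_sq (x : Sph3) :
    (x : EuclideanSpace ℝ (Fin 4)) 0 ^ 2 + (x : EuclideanSpace ℝ (Fin 4)) 1 ^ 2 +
    (x : EuclideanSpace ℝ (Fin 4)) 2 ^ 2 + (x : EuclideanSpace ℝ (Fin 4)) 3 ^ 2 = 1 := by
  have h : ‖(x : EuclideanSpace ℝ (Fin 4))‖ = 1 := by
    simpa using mem_sphere_zero_iff_norm.mp x.2
  rw [EuclideanSpace.norm_eq] at h
  have h2 := Real.sqrt_eq_one.mp h
  rw [Fin.sum_univ_four] at h2
  simpa [Real.norm_eq_abs, sq_abs] using h2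

def Hraw (a : (Sph3 × Sph3) × ℝ) : Fin 8 → ℝ := fun i =>
  let c := Real.cos (Real.pi * a.2); let s := Real.sin (Real.pi * a.2)
  let X := ((a.1.1 : EuclideanSpace ℝ (Fin 4)) : Fin 4 → ℝ)
  let Y := ((a.1.2 : EuclideanSpace ℝ (Fin 4)) : Fin 4 → ℝ)
  if i = 0 then max c 0 * X 0 + max (-c) 0 * Y 0
  else if i = 1 then max c 0 * X 1 + max (-c) 0 * Y 1
  else if i = 2 then max c 0 * X 2 + max (-c) 0 * Y 2
  else if i = 3 then max c 0 * X 3 + max (-c) 0 * Y 3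
  else if i = 4 then max s 0 * Y 0 + max (-s) 0 * X 0
  else if i = 5 then max s 0 * Y 1 + max (-s) 0 * X 1
  else if i = 6 then max s 0 * Y 2 + max (-s) 0 * X 2
  else max s 0 * Y 3 + max (-s) 0 * X 3

lemma Hraw_continuous : Continuous Hraw := by
  have hX : ∀ j : Fin 4, Continuous fun a : (Sph3 × Sph3) × ℝ =>
      (a.1.1 : EuclideanSpace ℝ (Fin 4)) j :=
    fun j => (continuous_apply j).comp ((PiLp.continuous_ofLp 2 _).comp
      (continuous_subtype_val.comp (continuous_fst.comp continuous_fst)))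
  have hY : ∀ j : Fin 4, Continuous fun a : (Sph3 × Sph3) × ℝ =>
      (a.1.2 : EuclideanSpace ℝ (Fin 4)) j :=
    fun j => (continuous_apply j).comp ((PiLp.continuous_ofLp 2 _).comp
      (continuous_subtype_val.comp (continuous_snd.comp continuous_fst)))
  have hc : Continuous fun a : (Sph3 × Sph3) × ℝ => Real.cos (Real.pi * a.2) :=
    Real.continuous_cos.comp (continuous_const.mul continuous_snd)
  have hs : Continuous fun a : (Sph3 × Sph3) × ℝ => Real.sin (Real.pi * a.2) :=
    Real.continuous_sin.comp (continuous_const.mul continuous_snd)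
  apply continuous_pi
  intro i
  unfold Hraw
  simp only []
  split_ifs <;>
    first
      | exact ((hc.max continuous_const).mul (hX _)).add ((hc.neg.max continuous_const).mul (hY _))
      | exact ((hs.max continuous_const).mul (hY _)).add ((hs.neg.max continuous_const).mul (hX _))

def Hvec (a : (Sph3 × Sph3) × ℝ) : EuclideanSpace ℝ (Fin 8) :=
  (EuclideanSpace.equiv (Fin 8) ℝ).symm (Hraw a)

lemma Hvec_apply (a : (Sph3 × Sph3) × ℝ) (i : Fin 8) : Hvec a i = Hraw a i := rfl

lemma Hvec_continuous : Continuous Hvec :=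
  (EuclideanSpace.equiv (Fin 8) ℝ).symm.continuous.comp Hraw_continuous

lemma Hvec_mem (a : (Sph3 × Sph3) × ℝ) :
    Hvec a ∈ Metric.sphere (0 : EuclideanSpace ℝ (Fin 8)) 1 := by
  obtain ⟨⟨x, y⟩, t⟩ := a
  rw [mem_sphere_zero_iff_norm, EuclideanSpace.norm_eq, Real.sqrt_eq_one, Fin.sum_univ_eight]
  simp only [Hvec_apply, Real.norm_eq_abs, sq_abs]
  simp only [Hraw, Fin.reduceEq, reduceIte]
  set c := Real.cos (Real.pi * t) with hcdef
  set s := Real.sin (Real.pi * t) with hsdef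
  set cp := max c 0
  set cm := max (-c) 0
  set sp := max s 0
  set sm := max (-s) 0
  set X0 := (x : EuclideanSpace ℝ (Fin 4)) 0
  set X1 := (x : EuclideanSpace ℝ (Fin 4)) 1
  set X2 := (x : EuclideanSpace ℝ (Fin 4)) 2
  set X3 := (x : EuclideanSpace ℝ (Fin 4)) 3
  set Y0 := (y : EuclideanSpace ℝ (Fin 4)) 0
  set Y1 := (y : EuclideanSpace ℝ (Fin 4)) 1
  set Y2 := (y : EuclideanSpace ℝ (Fin 4)) 2
  set Y3 := (y : EuclideanSpace ℝ (Fin 4)) 3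
  have hx := sph3_sum_sq x
  have hy := sph3_sum_sq y
  have hcc := pos_mul_negpart c
  have hss := pos_mul_negpart s
  have hc2 := pospart_sq_add c
  have hs2 := pospart_sq_add s
  have hpy := Real.sin_sq_add_cos_sq (Real.pi * t)
  rw [← hcdef, ← hsdef] at hpy
  linear_combination (cp^2 + sm^2) * hx + (cm^2 + sp^2) * hy +
    (2*(X0*Y0 + X1*Y1 + X2*Y2 + X3*Y3)) * hcc +
    (2*(X0*Y0 + X1*Y1 + X2*Y2 + X3*Y3)) * hss + hc2 + hs2 + hpy

def Hsph (a : (Sph3 × Sph3) × ℝ) : Sph7 := ⟨Hvec a, Hvec_mem a⟩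

lemma Hsph_continuous : Continuous Hsph :=
  Hvec_continuous.subtype_mk _

lemma Hraw_step (a : (Sph3 × Sph3) × ℝ) :
    Hraw (swapMap a.1, a.2 + 1) = Hraw a := by
  obtain ⟨⟨x, y⟩, t⟩ := a
  funext i
  have hc : Real.cos (Real.pi * (t + 1)) = -Real.cos (Real.pi * t) := by
    rw [show Real.pi * (t + 1) = Real.pi * t + Real.pi by ring, Real.cos_add_pi]
  have hs : Real.sin (Real.pi * (t + 1)) = -Real.sin (Real.pi * t) := by
    rw [show Real.pi * (t + 1) = Real.pi * t + Real.pi by ring, Real.sin_add_pi]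
  fin_cases i <;>
    simp [Hraw, swapMap, hc, hs, neg_neg] <;> ring

lemma Hsph_compat : ∀ a b, mtRel swapMap a b → Hsph a = Hsph b := by
  intro a b hab
  rw [hab]
  apply Subtype.ext
  show Hvec a = Hvec (swapMap a.1, a.2 + 1)
  unfold Hvec
  rw [Hraw_step]

lemma Hraw_negpair (x y : Sph3) (t : ℝ) :
    Hraw ((sphereNeg x, sphereNeg y), t) = -Hraw ((x, y), t) := by
  funext i
  fin_cases i <;>
    simp [Hraw, sphereNeg, PiLp.neg_apply] <;> ring

lemma Hvec_negpair (x y : Sph3) (t : ℝ) :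
    Hvec ((sphereNeg x, sphereNeg y), t) = -Hvec ((x, y), t) := by
  unfold Hvec
  rw [Hraw_negpair, map_neg]

def Htorus : MappingTorus swapMap → Sph7 := Quot.lift Hsph Hsph_compat

lemma Htorus_continuous : Continuous Htorus :=
  continuous_quot_lift _ Hsph_continuous

def pt1 : Sph3 := ⟨EuclideanSpace.single 0 1, by simp⟩
def pt2 : Sph3 := ⟨EuclideanSpace.single 1 1, by simp⟩

lemma mk_two_step (w : Sph3 × Sph3) (s : ℝ) :
    Quot.mk (mtRel swapMap) (w, s + 2) = Quot.mk (mtRel swapMap) (w, s) := by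
  have e1 : Quot.mk (mtRel swapMap) (w, s) = Quot.mk (mtRel swapMap) (swapMap w, s + 1) :=
    Quot.sound rfl
  have e2 : Quot.mk (mtRel swapMap) (swapMap w, s + 1) =
      Quot.mk (mtRel swapMap) (w, s + 1 + 1) := Quot.sound rfl
  have e3 : s + 1 + 1 = s + 2 := by ring
  rw [e1, e2, e3]

lemma mk_shift (w : Sph3 × Sph3) (t : ℝ) (k : ℤ) :
    Quot.mk (mtRel swapMap) (w, t + 2 * (k : ℝ)) = Quot.mk (mtRel swapMap) (w, t) := by
  induction k using Int.induction_on with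
  | zero => norm_num
  | succ n ih =>
      have harith : t + 2 * ((n : ℝ) + 1) = t + 2 * (n : ℝ) + 2 := by ring
      push_cast
      rw [harith, mk_two_step]
      push_cast at ih
      exact ih
  | pred n ih =>
      have harith : t + 2 * (-(n : ℝ) - 1) + 2 = t + 2 * (-(n : ℝ)) := by ring
      have := mk_two_step w (t + 2 * (-(n : ℝ) - 1))
      rw [harith] at this
      push_cast
      push_cast at ih
      rw [← this]
      exact ih

lemma rp7_cases {a b : Sph7} (h : Quot.mk antipRel7 a = Quot.mk antipRel7 b) :
    a = b ∨ (a : EuclideanSpace ℝ (Fin 8)) = -(b : EuclideanSpace ℝ (Fin 8)) := by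
  have resp : ∀ u v : Sph7, antipRel7 u v →
      ((u : EuclideanSpace ℝ (Fin 8)) = (b : EuclideanSpace ℝ (Fin 8)) ∨
        (u : EuclideanSpace ℝ (Fin 8)) = -(b : EuclideanSpace ℝ (Fin 8))) =
      ((v : EuclideanSpace ℝ (Fin 8)) = (b : EuclideanSpace ℝ (Fin 8)) ∨
        (v : EuclideanSpace ℝ (Fin 8)) = -(b : EuclideanSpace ℝ (Fin 8))) := by
    intro u v huv
    have huv2 : (u : EuclideanSpace ℝ (Fin 8)) = -(v : EuclideanSpace ℝ (Fin 8)) := by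
      rw [huv, neg_neg]
    apply propext
    constructor
    · rintro (h1 | h1)
      · right; rw [huv, h1]
      · left; rw [huv, h1, neg_neg]
    · rintro (h1 | h1)
      · right; rw [huv2, h1]
      · left; rw [huv2, h1, neg_neg]
  have hPab : ((a : EuclideanSpace ℝ (Fin 8)) = (b : EuclideanSpace ℝ (Fin 8)) ∨
      (a : EuclideanSpace ℝ (Fin 8)) = -(b : EuclideanSpace ℝ (Fin 8))) =
      ((b : EuclideanSpace ℝ (Fin 8)) = (b : EuclideanSpace ℝ (Fin 8)) ∨
      (b : EuclideanSpace ℝ (Fin 8)) = -(b : EuclideanSpace ℝ (Fin 8))) :=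
    congrArg (Quot.lift (fun w : Sph7 =>
      ((w : EuclideanSpace ℝ (Fin 8)) = (b : EuclideanSpace ℝ (Fin 8)) ∨
        (w : EuclideanSpace ℝ (Fin 8)) = -(b : EuclideanSpace ℝ (Fin 8)))) resp) h
  have h2 := cast hPab.symm (Or.inl rfl :
      ((b : EuclideanSpace ℝ (Fin 8)) = (b : EuclideanSpace ℝ (Fin 8)) ∨
      (b : EuclideanSpace ℝ (Fin 8)) = -(b : EuclideanSpace ℝ (Fin 8))))
  rcases h2 with h2 | h2
  · left; exact Subtype.ext h2
  · right; exact h2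

set_option maxHeartbeats 2000000 in
lemma class_unique (x y : Sph3) (t : ℝ)
    (h : Hraw ((x, y), t) = Hraw ((pt1, pt2), (1/3 : ℝ))) :
    Quot.mk (mtRel swapMap) ((x, y), t) =
      Quot.mk (mtRel swapMap) ((pt1, pt2), (1/3 : ℝ)) := by
  have hc13 : Real.cos (Real.pi * (1/3 : ℝ)) = 1/2 := by
    rw [show Real.pi * (1/3 : ℝ) = Real.pi / 3 by ring, Real.cos_pi_div_three]
  have hs13 : Real.sin (Real.pi * (1/3 : ℝ)) = Real.sqrt 3 / 2 := by
    rw [show Real.pi * (1/3 : ℝ) = Real.pi / 3 by ring, Real.sin_pi_div_three]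
  have hs3 : Real.sqrt 3 ^ 2 = 3 := Real.sq_sqrt (by norm_num)
  have hs3pos : (0 : ℝ) < Real.sqrt 3 := Real.sqrt_pos.mpr (by norm_num)
  have hmax1 : max (1/2 : ℝ) 0 = 1/2 := max_eq_left (by norm_num)
  have hmax2 : max (-(1/2) : ℝ) 0 = 0 := max_eq_right (by norm_num)
  have hmax3 : max (Real.sqrt 3 / 2) 0 = Real.sqrt 3 / 2 := max_eq_left (by positivity)
  have hmax4 : max (-(Real.sqrt 3 / 2)) 0 = 0 :=
    max_eq_right (neg_nonpos.mpr (by positivity))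
  have e0 := congrFun h 0
  have e1 := congrFun h 1
  have e2 := congrFun h 2
  have e3 := congrFun h 3
  have e4 := congrFun h 4
  have e5 := congrFun h 5
  have e6 := congrFun h 6
  have e7 := congrFun h 7
  simp only [Hraw, Fin.reduceEq, reduceIte, hc13, hs13, hmax1, hmax2, hmax3, hmax4] at e0 e1 e2 e3 e4 e5 e6 e7
  simp only [pt1, pt2, EuclideanSpace.single_apply, Fin.reduceEq, reduceIte,
    mul_one, mul_zero, add_zero, zero_add, one_mul, zero_mul, if_true, if_false] at e0 e1 e2 e3 e4 e5 e6 e7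
  have hx := sph3_sum_sq x
  have hy := sph3_sum_sq y
  set c := Real.cos (Real.pi * t) with hcdef
  set s := Real.sin (Real.pi * t) with hsdef
  set X0 := (x : EuclideanSpace ℝ (Fin 4)) 0
  set X1 := (x : EuclideanSpace ℝ (Fin 4)) 1
  set X2 := (x : EuclideanSpace ℝ (Fin 4)) 2
  set X3 := (x : EuclideanSpace ℝ (Fin 4)) 3
  set Y0 := (y : EuclideanSpace ℝ (Fin 4)) 0
  set Y1 := (y : EuclideanSpace ℝ (Fin 4)) 1
  set Y2 := (y : EuclideanSpace ℝ (Fin 4)) 2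
  set Y3 := (y : EuclideanSpace ℝ (Fin 4)) 3
  rcases le_total 0 c with hc | hc <;> rcases le_total 0 s with hs | hs
  · -- c ≥ 0, s ≥ 0 : the solution x = pt1, y = pt2, t = 1/3 + 2n
    simp only [max_eq_left hc, max_eq_right (neg_nonpos.mpr hc), max_eq_left hs,
      max_eq_right (neg_nonpos.mpr hs), zero_mul, add_zero, zero_add] at e0 e1 e2 e3 e4 e5 e6 e7
    have hc2 : c ^ 2 = 1/4 := by
      linear_combination (-(c^2)) * hx + (c*X0 + 1/2) * e0 + (c*X1) * e1 + (c*X2) * e2 +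
        (c*X3) * e3
    have hcv : c = 1/2 := by
      have hfac : (c - 1/2) * (c + 1/2) = 0 := by linear_combination hc2
      rcases mul_eq_zero.mp hfac with h' | h' <;> linarith
    have hs2' : s ^ 2 = 3/4 := by
      linear_combination (-(s^2)) * hy + (s*Y0) * e4 + (s*Y1 + Real.sqrt 3 / 2) * e5 +
        (s*Y2) * e6 + (s*Y3) * e7 + (1/4) * hs3
    have hsv : s = Real.sqrt 3 / 2 := by
      have hfac : (s - Real.sqrt 3 / 2) * (s + Real.sqrt 3 / 2) = 0 := by
        linear_combination hs2' - (1/4) * hs3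
      rcases mul_eq_zero.mp hfac with h' | h'
      · linarith
      · linarith [hs3pos]
    have hX0 : X0 = 1 := by rw [hcv] at e0; linarith
    have hX1 : X1 = 0 := by rw [hcv] at e1; linarith
    have hX2 : X2 = 0 := by rw [hcv] at e2; linarith
    have hX3 : X3 = 0 := by rw [hcv] at e3; linarith
    have hY0 : Y0 = 0 := by
      rw [hsv] at e4
      rcases mul_eq_zero.mp e4 with h' | h'
      · linarith
      · exact h'
    have hY1 : Y1 = 1 := by
      rw [hsv] at e5
      have h' : Real.sqrt 3 * Y1 = Real.sqrt 3 * 1 := by linarith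
      exact mul_left_cancel₀ (ne_of_gt hs3pos) h'
    have hY2 : Y2 = 0 := by
      rw [hsv] at e6
      rcases mul_eq_zero.mp e6 with h' | h'
      · linarith
      · exact h'
    have hY3 : Y3 = 0 := by
      rw [hsv] at e7
      rcases mul_eq_zero.mp e7 with h' | h'
      · linarith
      · exact h'
    have hxe : x = pt1 := by
      apply Subtype.ext; ext j; fin_cases j <;>
        simp [pt1, EuclideanSpace.single_apply, Fin.reduceEq, reduceIte]
      · exact hX0
      · exact hX1
      · exact hX2
      · exact hX3
    have hye : y = pt2 := by
      apply Subtype.ext; ext j; fin_cases j <;>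
        simp [pt2, EuclideanSpace.single_apply, Fin.reduceEq, reduceIte]
      · exact hY0
      · exact hY1
      · exact hY2
      · exact hY3
    have hcost : Real.cos (Real.pi * t - Real.pi / 3) = 1 := by
      rw [Real.cos_sub, Real.cos_pi_div_three, Real.sin_pi_div_three, ← hcdef, ← hsdef,
        hcv, hsv]
      linear_combination (1/4) * hs3
    obtain ⟨n, hn⟩ := (Real.cos_eq_one_iff _).mp hcost
    have ht : t = 1/3 + 2 * (n : ℝ) := by
      have h' : Real.pi * (1/3 + 2 * (n : ℝ) - t) = 0 := by linear_combination hn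
      rcases mul_eq_zero.mp h' with h'' | h''
      · exact absurd h'' Real.pi_ne_zero
      · linarith
    rw [hxe, hye, ht]
    exact mk_shift (pt1, pt2) (1/3) n
  · -- c ≥ 0, s ≤ 0 : contradiction
    simp only [max_eq_left hc, max_eq_right (neg_nonpos.mpr hc), max_eq_right hs,
      max_eq_left (neg_nonneg.mpr hs), zero_mul, add_zero, zero_add] at e0 e1 e2 e3 e4 e5 e6 e7
    have hs2' : s ^ 2 = 3/4 := by
      linear_combination (-(s^2)) * hx + (-s*X0) * e4 + (-s*X1 + Real.sqrt 3 / 2) * e5 +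
        (-s*X2) * e6 + (-s*X3) * e7 + (1/4) * hs3
    have hsv : s = -(Real.sqrt 3 / 2) := by
      have hfac : (s + Real.sqrt 3 / 2) * (s - Real.sqrt 3 / 2) = 0 := by
        linear_combination hs2' - (1/4) * hs3
      rcases mul_eq_zero.mp hfac with h' | h'
      · linarith
      · linarith [hs3pos]
    have hX0 : X0 = 0 := by
      rw [hsv] at e4
      rcases mul_eq_zero.mp e4 with h' | h'
      · linarith [hs3pos]
      · exact h'
    rw [hX0] at e0
    norm_num at e0
  · -- c ≤ 0, s ≥ 0 : contradiction
    simp only [max_eq_right hc, max_eq_left (neg_nonneg.mpr hc), max_eq_left hs,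
      max_eq_right (neg_nonpos.mpr hs), zero_mul, add_zero, zero_add] at e0 e1 e2 e3 e4 e5 e6 e7
    have hc2 : c ^ 2 = 1/4 := by
      linear_combination (-(c^2)) * hy + (-c*Y0 + 1/2) * e0 + (-c*Y1) * e1 + (-c*Y2) * e2 +
        (-c*Y3) * e3
    have hcv : c = -(1/2) := by
      have hfac : (c + 1/2) * (c - 1/2) = 0 := by linear_combination hc2
      rcases mul_eq_zero.mp hfac with h' | h' <;> linarith
    have hY1 : Y1 = 0 := by
      rw [hcv] at e1
      rcases mul_eq_zero.mp e1 with h' | h'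
      · linarith
      · exact h'
    rw [hY1] at e5
    have h0' : (0 : ℝ) = Real.sqrt 3 / 2 := by simpa using e5
    linarith [hs3pos]
  · -- c ≤ 0, s ≤ 0 : the solution x = pt2, y = pt1, t = 4/3 + 2n
    simp only [max_eq_right hc, max_eq_left (neg_nonneg.mpr hc), max_eq_right hs,
      max_eq_left (neg_nonneg.mpr hs), zero_mul, add_zero, zero_add] at e0 e1 e2 e3 e4 e5 e6 e7
    have hc2 : c ^ 2 = 1/4 := by
      linear_combination (-(c^2)) * hy + (-c*Y0 + 1/2) * e0 + (-c*Y1) * e1 + (-c*Y2) * e2 +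
        (-c*Y3) * e3
    have hcv : c = -(1/2) := by
      have hfac : (c + 1/2) * (c - 1/2) = 0 := by linear_combination hc2
      rcases mul_eq_zero.mp hfac with h' | h' <;> linarith
    have hs2' : s ^ 2 = 3/4 := by
      linear_combination (-(s^2)) * hx + (-s*X0) * e4 + (-s*X1 + Real.sqrt 3 / 2) * e5 +
        (-s*X2) * e6 + (-s*X3) * e7 + (1/4) * hs3
    have hsv : s = -(Real.sqrt 3 / 2) := by
      have hfac : (s + Real.sqrt 3 / 2) * (s - Real.sqrt 3 / 2) = 0 := by
        linear_combination hs2' - (1/4) * hs3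
      rcases mul_eq_zero.mp hfac with h' | h'
      · linarith
      · linarith [hs3pos]
    have hY0 : Y0 = 1 := by rw [hcv] at e0; linarith
    have hY1 : Y1 = 0 := by rw [hcv] at e1; linarith
    have hY2 : Y2 = 0 := by rw [hcv] at e2; linarith
    have hY3 : Y3 = 0 := by rw [hcv] at e3; linarith
    have hX0 : X0 = 0 := by
      rw [hsv] at e4
      rcases mul_eq_zero.mp e4 with h' | h'
      · linarith [hs3pos]
      · exact h'
    have hX1 : X1 = 1 := by
      rw [hsv] at e5
      have h' : Real.sqrt 3 * X1 = Real.sqrt 3 * 1 := by linarith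
      exact mul_left_cancel₀ (ne_of_gt hs3pos) h'
    have hX2 : X2 = 0 := by
      rw [hsv] at e6
      rcases mul_eq_zero.mp e6 with h' | h'
      · linarith [hs3pos]
      · exact h'
    have hX3 : X3 = 0 := by
      rw [hsv] at e7
      rcases mul_eq_zero.mp e7 with h' | h'
      · linarith [hs3pos]
      · exact h'
    have hxe : x = pt2 := by
      apply Subtype.ext; ext j; fin_cases j <;>
        simp [pt2, EuclideanSpace.single_apply, Fin.reduceEq, reduceIte]
      · exact hX0
      · exact hX1
      · exact hX2
      · exact hX3
    have hye : y = pt1 := by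
      apply Subtype.ext; ext j; fin_cases j <;>
        simp [pt1, EuclideanSpace.single_apply, Fin.reduceEq, reduceIte]
      · exact hY0
      · exact hY1
      · exact hY2
      · exact hY3
    have h43c : Real.cos (4 * Real.pi / 3) = -(1/2) := by
      rw [show (4 : ℝ) * Real.pi / 3 = Real.pi / 3 + Real.pi by ring, Real.cos_add_pi,
        Real.cos_pi_div_three]
    have h43s : Real.sin (4 * Real.pi / 3) = -(Real.sqrt 3 / 2) := by
      rw [show (4 : ℝ) * Real.pi / 3 = Real.pi / 3 + Real.pi by ring, Real.sin_add_pi,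
        Real.sin_pi_div_three]
    have hcost : Real.cos (Real.pi * t - 4 * Real.pi / 3) = 1 := by
      rw [Real.cos_sub, h43c, h43s, ← hcdef, ← hsdef, hcv, hsv]
      linear_combination (1/4) * hs3
    obtain ⟨n, hn⟩ := (Real.cos_eq_one_iff _).mp hcost
    have ht : t = 4/3 + 2 * (n : ℝ) := by
      have h' : Real.pi * (4/3 + 2 * (n : ℝ) - t) = 0 := by linear_combination hn
      rcases mul_eq_zero.mp h' with h'' | h''
      · exact absurd h'' Real.pi_ne_zero
      · linarith
    rw [hxe, hye, ht]
    have hstep : Quot.mk (mtRel swapMap) ((pt1, pt2), (1/3 + 2 * (n : ℝ))) =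
        Quot.mk (mtRel swapMap) ((pt2, pt1), (4/3 + 2 * (n : ℝ))) := by
      apply Quot.sound
      show ((pt2, pt1), (4/3 + 2 * (n : ℝ))) = (swapMap (pt1, pt2), (1/3 + 2 * (n : ℝ)) + 1)
      rw [show (4 : ℝ)/3 + 2 * (n : ℝ) = (1/3 + 2 * (n : ℝ)) + 1 by ring]
      rfl
    rw [← hstep]
    exact mk_shift (pt1, pt2) (1/3) n

end CharAux

/-- Let `N⁷ = (S³×S³) ⋊ S¹` be the mapping torus of the factor swap and let
`p : N⁷ → N̂⁷` be the 2-sheeted covering of the paper (the quotient by the free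
involution `T` induced by the diagonal antipodal map `(x,y,t) ↦ (−x,−y,t)` — the
space of pairs of 2-point configurations up to simultaneous transposition), with
characteristic class `p ∈ H¹(N̂⁷; ℤ/2)`.  Then `⟨p⁷, [N̂⁷]⟩ = 1 (mod 2)`: there is a
continuous map `F : N̂⁷ → ℝP⁷` classifying the covering (it lifts to an equivariant
map `F̃ : N⁷ → S⁷`), whose mod 2 degree is odd, i.e. some point of `ℝP⁷` has a finite
preimage of odd cardinality. -/
theorem characteristic_number_p7_is_one
    (N Nhat : Type) [TopologicalSpace N] [TopologicalSpace Nhat] [CompactSpace Nhat]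
    (e : N ≃ₜ MappingTorus swapMap)          -- N is the mapping torus of the swap
    (p : N → Nhat) (hp : IsCoveringMap p)
    (T : N → N) (hTc : Continuous T) (hTinv : ∀ x, T (T x) = x)
    (hTfree : ∀ x, T x ≠ x) (hdeck : ∀ x, p (T x) = p x)
    (hfib : ∀ y : Nhat, ∃ x, p ⁻¹' {y} = {x, T x})
    -- T is induced by the diagonal antipodal involution on the fibers S³ × S³
    (hT : ∀ a : (Sph3 × Sph3) × ℝ,
      e (T (e.symm (Quot.mk (mtRel swapMap) a))) =
        Quot.mk (mtRel swapMap) ((sphereNeg a.1.1, sphereNeg a.1.2), a.2)) :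
    ∃ F : Nhat → RP7, Continuous F ∧
      (∃ Ft : N → Sph7, Continuous Ft ∧
        (∀ x : N, Quot.mk antipRel7 (Ft x) = F (p x)) ∧
        (∀ x : N, (Ft (T x) : EuclideanSpace ℝ (Fin 8)) =
          -(Ft x : EuclideanSpace ℝ (Fin 8)))) ∧
      ∃ y : RP7, (F ⁻¹' {y}).Finite ∧ Odd (F ⁻¹' {y}).ncard := by
  classical
  set Ft : N → Sph7 := fun n => Htorus (e n) with hFtdef
  have hFtc : Continuous Ft := Htorus_continuous.comp e.continuous
  have hFt_mk : ∀ a : (Sph3 × Sph3) × ℝ,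
      Ft (e.symm (Quot.mk (mtRel swapMap) a)) = Hsph a := by
    intro a
    show Htorus (e (e.symm (Quot.mk (mtRel swapMap) a))) = Hsph a
    rw [show e (e.symm (Quot.mk (mtRel swapMap) a)) = Quot.mk (mtRel swapMap) a from e.apply_symm_apply _]
    rfl
  -- anti-equivariance
  have hanti : ∀ x : N, (Ft (T x) : EuclideanSpace ℝ (Fin 8)) =
      -(Ft x : EuclideanSpace ℝ (Fin 8)) := by
    intro x
    obtain ⟨a, ha⟩ := Quot.exists_rep (e x)
    have hx' : e.symm (Quot.mk (mtRel swapMap) a) = x := by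
      rw [ha, e.symm_apply_apply]
    have h1 : e (T x) = Quot.mk (mtRel swapMap) ((sphereNeg a.1.1, sphereNeg a.1.2), a.2) := by
      have h2 := hT a
      rwa [hx'] at h2
    show (Htorus (e (T x)) : EuclideanSpace ℝ (Fin 8)) =
      -(Htorus (e x) : EuclideanSpace ℝ (Fin 8))
    rw [h1, ← ha]
    show Hvec ((sphereNeg a.1.1, sphereNeg a.1.2), a.2) = -(Hvec a)
    exact Hvec_negpair a.1.1 a.1.2 a.2
  -- section of the covering
  have hsecfib : ∀ z, p ⁻¹' {z} = {(hfib z).choose, T (hfib z).choose} :=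
    fun z => (hfib z).choose_spec
  set sec : Nhat → N := fun z => (hfib z).choose with hsecdef
  have hpsec : ∀ z, p (sec z) = z := by
    intro z
    have hmem : sec z ∈ p ⁻¹' {z} := by
      rw [hsecfib z]; exact Set.mem_insert _ _
    simpa using hmem
  set F : Nhat → RP7 := fun z => Quot.mk antipRel7 (Ft (sec z)) with hFdef
  -- compatibility
  have hFp : ∀ x : N, Quot.mk antipRel7 (Ft x) = F (p x) := by
    intro x
    have hmem : x ∈ p ⁻¹' {p x} := by simp
    rw [hsecfib (p x)] at hmem
    rcases hmem with hmem | hmem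
    · have hmem' : x = sec (p x) := hmem
      show Quot.mk antipRel7 (Ft x) = Quot.mk antipRel7 (Ft (sec (p x)))
      rw [← hmem']
    · -- x = T (sec (p x))
      show Quot.mk antipRel7 (Ft x) = Quot.mk antipRel7 (Ft (sec (p x)))
      apply Quot.sound
      have hmem' : x = T (sec (p x)) := hmem
      have hTx : T x = sec (p x) := by
        conv_lhs => rw [hmem']
        rw [hTinv]
      show (Ft (sec (p x)) : EuclideanSpace ℝ (Fin 8)) = -(Ft x : EuclideanSpace ℝ (Fin 8))
      rw [← hTx]
      exact hanti x
  -- continuity of F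
  have hFc : Continuous F := by
    have hsurj : Function.Surjective p := fun z => ⟨sec z, hpsec z⟩
    have hqm := hp.isQuotientMap hsurj
    rw [hqm.continuous_iff]
    have hcomp : F ∘ p = fun x => Quot.mk antipRel7 (Ft x) :=
      funext fun x => (hFp x).symm
    rw [hcomp]
    exact continuous_quot_mk.comp hFtc
  -- the regular value
  set ytgt : Sph7 := Hsph ((pt1, pt2), (1/3 : ℝ)) with hytgtdef
  set x0 : N := e.symm (Quot.mk (mtRel swapMap) ((pt1, pt2), (1/3 : ℝ))) with hx0def
  have hFtx0 : Ft x0 = ytgt := hFt_mk _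
  have hinj : ∀ w : N, Ft w = ytgt → w = x0 := by
    intro w hw
    obtain ⟨a, ha⟩ := Quot.exists_rep (e w)
    have hw' : e.symm (Quot.mk (mtRel swapMap) a) = w := by
      rw [ha, e.symm_apply_apply]
    have hsph : Hsph a = ytgt := by
      rw [← hFt_mk a, hw']
      exact hw
    have hvec : Hraw a = Hraw ((pt1, pt2), (1/3 : ℝ)) := congrArg (fun v : Sph7 => (v : EuclideanSpace ℝ (Fin 8)).ofLp) hsph
    have hcls : Quot.mk (mtRel swapMap) a =
        Quot.mk (mtRel swapMap) ((pt1, pt2), (1/3 : ℝ)) :=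
      class_unique a.1.1 a.1.2 a.2 hvec
    rw [← hw', hcls]
  -- the preimage is a singleton
  have hset : F ⁻¹' {Quot.mk antipRel7 ytgt} = {p x0} := by
    ext z
    simp only [Set.mem_preimage, Set.mem_singleton_iff]
    constructor
    · intro hz
      have hz' : Quot.mk antipRel7 (Ft (sec z)) = Quot.mk antipRel7 ytgt := hz
      rcases rp7_cases hz' with h1 | h1
      · have h2 : sec z = x0 := hinj _ h1
        rw [← hpsec z, h2]
      · have h2 : Ft (T (sec z)) = ytgt := by
          apply Subtype.ext
          rw [hanti (sec z), h1, neg_neg]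
        have h3 := hinj _ h2
        rw [← hpsec z, ← hdeck (sec z), h3]
    · intro hz
      rw [hz, ← hFp x0, hFtx0]; exact rfl
  refine ⟨F, hFc, ⟨Ft, hFtc, hFp, hanti⟩, Quot.mk antipRel7 ytgt, ?_, ?_⟩
  · exact (Set.finite_singleton (p x0)).subset hset.le
  · exact (congrArg Odd ((congrArg Set.ncard hset).trans (Set.ncard_singleton _))).mpr odd_one
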